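/- Let 0 < x < 1 and let Z₁, Z₂, ... be independent random variables with P(Zᵢ ≥ k) = x^{ik} for all k ∈ ℕ (so Zᵢ is geometric with parameter 1−xⁱ). For integers n ≥ m > 0 and k ≥ 0, P(Z_m + Z_{m+1} + ... + Z_n = k) = x^{mk} · (∏_{i=n−m+1}^{n−m+k} (1−xⁱ)) · (∏_{i=m}^n (1−xⁱ)) / (∏_{i=1}^k (1−xⁱ)). -/

import Mathlib

open MeasureTheory ProbabilityTheory Finset

private lemma denom_pos' (x : ℝ) (hx0 : 0 < x) (hx1 : x < 1) (k : ℕ) :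
    0 < ∏ i ∈ Finset.range k, (1 - x ^ (1 + i)) := by
  apply Finset.prod_pos
  intro i _
  have : x ^ (1 + i) < 1 := pow_lt_one₀ hx0.le hx1 (by omega)
  linarith

private lemma pascalA' (x : ℝ) (a k : ℕ) :
    (∏ i ∈ range (k+1), (1 - x ^ (a+1+i)))
      = (∏ i ∈ range (k+1), (1 - x ^ (a+i)))
        + x ^ a * (1 - x ^ (k+1)) * ∏ i ∈ range k, (1 - x ^ (a+1+i)) := by
  have h1 : (∏ i ∈ range (k+1), (1 - x ^ (a+i)))
      = (1 - x ^ a) * ∏ i ∈ range k, (1 - x ^ (a+1+i)) := by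
    rw [Finset.prod_range_succ']
    simp only [add_zero]
    rw [mul_comm]
    congr 1
    apply Finset.prod_congr rfl
    intro i _
    rw [show a + (i+1) = a+1+i by omega]
  have h2 : (∏ i ∈ range (k+1), (1 - x ^ (a+1+i)))
      = (∏ i ∈ range k, (1 - x ^ (a+1+i))) * (1 - x ^ (a+1+k)) := by
    rw [Finset.prod_range_succ]
  rw [h1, h2]
  have : x ^ (a+1+k) = x ^ a * x ^ (k+1) := by
    rw [← pow_add]; congr 1; omega
  rw [this]; ring

private lemma keyId' (x : ℝ) (hx0 : 0 < x) (hx1 : x < 1) (a k : ℕ) :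
    ∑ j ∈ range (k+1), x ^ (a*j)
        * ((∏ i ∈ range (k-j), (1 - x ^ (a+i))) / ∏ i ∈ range (k-j), (1 - x ^ (1+i)))
      = (∏ i ∈ range k, (1 - x ^ (a+1+i))) / ∏ i ∈ range k, (1 - x ^ (1+i)) := by
  induction k with
  | zero => simp
  | succ k ih =>
      rw [Finset.sum_range_succ']
      have hre : ∀ j ∈ range (k+1),
          x ^ (a*(j+1)) * ((∏ i ∈ range (k+1-(j+1)), (1 - x ^ (a+i)))
              / ∏ i ∈ range (k+1-(j+1)), (1 - x ^ (1+i)))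
          = x ^ a * (x ^ (a*j) * ((∏ i ∈ range (k-j), (1 - x ^ (a+i)))
              / ∏ i ∈ range (k-j), (1 - x ^ (1+i)))) := by
        intro j _
        have h1 : k + 1 - (j+1) = k - j := by omega
        have h2 : x ^ (a*(j+1)) = x ^ a * x ^ (a*j) := by
          rw [← pow_add]; congr 1; ring
        rw [h1, h2]; ring
      rw [Finset.sum_congr rfl hre, ← Finset.mul_sum, ih]
      simp only [Nat.mul_zero, pow_zero, Nat.sub_zero, one_mul]
      have hDk : (∏ i ∈ range k, (1 - x ^ (1+i))) ≠ 0 := (denom_pos' x hx0 hx1 k).ne'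
      have hDk1 : (∏ i ∈ range (k+1), (1 - x ^ (1+i))) ≠ 0 := (denom_pos' x hx0 hx1 (k+1)).ne'
      have hD : (∏ i ∈ range (k+1), (1 - x ^ (1+i)))
          = (∏ i ∈ range k, (1 - x ^ (1+i))) * (1 - x ^ (k+1)) := by
        rw [Finset.prod_range_succ, add_comm 1 k]
      have hxk : (1 : ℝ) - x ^ (k+1) ≠ 0 := by
        have : x ^ (k+1) < 1 := pow_lt_one₀ hx0.le hx1 (by omega)
        linarith
      rw [pascalA' x a k, hD]
      field_simp
      ring

private lemma pmf_eq' {Ω : Type*} [MeasurableSpace Ω] (P : Measure Ω)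
    [IsProbabilityMeasure P] (x : ℝ) (hx0 : 0 < x)
    (Z : ℕ → Ω → ℕ) (hmeas : ∀ i, Measurable (Z i))
    (hgeom : ∀ i, 1 ≤ i → ∀ k : ℕ, P {ω | k ≤ Z i ω} = ENNReal.ofReal (x ^ (i * k)))
    (i : ℕ) (hi : 1 ≤ i) (j : ℕ) :
    P {ω | Z i ω = j} = ENNReal.ofReal (x ^ (i * j) * (1 - x ^ i)) := by
  have hset : {ω | Z i ω = j} = {ω | j ≤ Z i ω} \ {ω | j + 1 ≤ Z i ω} := by
    ext ω; simp only [Set.mem_setOf_eq, Set.mem_diff]; omega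
  have hsub : {ω | j + 1 ≤ Z i ω} ⊆ {ω | j ≤ Z i ω} := fun ω h => by
    simp only [Set.mem_setOf_eq] at *; omega
  have hm2 : NullMeasurableSet {ω | j + 1 ≤ Z i ω} P :=
    ((hmeas i (measurableSet_Ici (a := j + 1))).congr (by ext ω; simp)).nullMeasurableSet
  rw [hset, measure_diff hsub hm2 (measure_ne_top P _), hgeom i hi j, hgeom i hi (j+1)]
  rw [← ENNReal.ofReal_sub _ (by positivity)]
  have hr : x ^ (i * j) - x ^ (i * (j + 1)) = x ^ (i * j) * (1 - x ^ i) := by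
    rw [show i * (j + 1) = i * j + i by ring, pow_add]; ring
  rw [hr]

theorem geometric_sum_pmf {Ω : Type*} [MeasurableSpace Ω] (P : Measure Ω)
    [IsProbabilityMeasure P] (x : ℝ) (hx0 : 0 < x) (hx1 : x < 1)
    (Z : ℕ → Ω → ℕ) (hmeas : ∀ i, Measurable (Z i))
    (hindep : iIndepFun Z P)
    (hgeom : ∀ i, 1 ≤ i → ∀ k : ℕ, P {ω | k ≤ Z i ω} = ENNReal.ofReal (x ^ (i * k)))
    (m n : ℕ) (hm : 0 < m) (hmn : m ≤ n) (k : ℕ) :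
    P {ω | ∑ i ∈ Finset.Icc m n, Z i ω = k}
      = ENNReal.ofReal (x ^ (m * k)
          * (∏ i ∈ Finset.Icc (n - m + 1) (n - m + k), (1 - x ^ i))
          * (∏ i ∈ Finset.Icc m n, (1 - x ^ i))
          / ∏ i ∈ Finset.Icc 1 k, (1 - x ^ i)) := by
  have hD1pos : ∀ r : ℕ, 0 < ∏ i ∈ Finset.Icc 1 r, (1 - x ^ i) := by
    intro r
    apply Finset.prod_pos
    intro i hi
    simp only [Finset.mem_Icc] at hi
    have : x ^ i < 1 := pow_lt_one₀ hx0.le hx1 (by omega)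
    linarith
  induction n, hmn using Nat.le_induction generalizing k with
  | base =>
      have hev : {ω | ∑ i ∈ Finset.Icc m m, Z i ω = k} = {ω | Z m ω = k} := by
        ext ω; simp
      rw [hev, pmf_eq' P x hx0 Z hmeas hgeom m hm k]
      congr 1
      have hD : (∏ i ∈ Finset.Icc 1 k, (1 - x ^ i)) ≠ 0 := (hD1pos k).ne'
      simp only [Nat.sub_self, Nat.zero_add, Finset.Icc_self, Finset.prod_singleton]
      field_simp
  | succ n hn ih =>
      set a := n - m + 1 with ha
      have hma : m + a = n + 1 := by omega
      have hSind : IndepFun (fun ω => ∑ i ∈ Finset.Icc m n, Z i ω) (Z (n+1)) P := by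
        have h := hindep.indepFun_finsetSum_of_notMem hmeas
          (s := Finset.Icc m n) (i := n+1) (by simp)
        have hfun : (∑ i ∈ Finset.Icc m n, Z i) = fun ω => ∑ i ∈ Finset.Icc m n, Z i ω := by
          ext ω; simp
        rwa [hfun] at h
      have hev : {ω | ∑ i ∈ Finset.Icc m (n+1), Z i ω = k}
          = ⋃ j ∈ Finset.range (k+1),
              ({ω | ∑ i ∈ Finset.Icc m n, Z i ω = k - j} ∩ {ω | Z (n+1) ω = j}) := by
        ext ω
        simp only [Set.mem_setOf_eq, Set.mem_iUnion, Set.mem_inter_iff, Finset.mem_range,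
          exists_prop]
        rw [Finset.sum_Icc_succ_top (by omega : m ≤ n + 1)]
        constructor
        · intro h
          exact ⟨Z (n+1) ω, by omega, by omega, rfl⟩
        · rintro ⟨j, hj, h1, h2⟩
          omega
      have hmeasS : Measurable (fun ω => ∑ i ∈ Finset.Icc m n, Z i ω) := by
        apply Finset.measurable_sum
        intro i _; exact hmeas i
      rw [hev, measure_biUnion_finset]
      rotate_left
      · intro j1 h1 j2 h2 hne
        apply Set.disjoint_left.2
        rintro ω ⟨_, hZ1⟩ ⟨_, hZ2⟩
        simp only [Set.mem_setOf_eq] at hZ1 hZ2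
        exact hne (hZ1 ▸ hZ2 ▸ rfl)
      · intro j hj
        exact (hmeasS (measurableSet_singleton (k - j))).inter
          ((hmeas (n+1)) (measurableSet_singleton j))
      have hTnn : ∀ r : ℕ, 0 ≤ x ^ (m * r)
          * (∏ i ∈ Finset.Icc (n - m + 1) (n - m + r), (1 - x ^ i))
          * (∏ i ∈ Finset.Icc m n, (1 - x ^ i))
          / ∏ i ∈ Finset.Icc 1 r, (1 - x ^ i) := by
        intro r
        apply div_nonneg _ (hD1pos r).le
        apply mul_nonneg (mul_nonneg (by positivity) _) _
        all_goals
          apply Finset.prod_nonneg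
          intro i hi
          simp only [Finset.mem_Icc] at hi
          have : x ^ i ≤ 1 := pow_le_one₀ hx0.le hx1.le
          linarith
      have hterm : ∀ j ∈ Finset.range (k+1),
          P ({ω | ∑ i ∈ Finset.Icc m n, Z i ω = k - j} ∩ {ω | Z (n+1) ω = j})
          = ENNReal.ofReal ((x ^ (m * (k-j))
              * (∏ i ∈ Finset.Icc (n - m + 1) (n - m + (k-j)), (1 - x ^ i))
              * (∏ i ∈ Finset.Icc m n, (1 - x ^ i))
              / ∏ i ∈ Finset.Icc 1 (k-j), (1 - x ^ i))
              * (x ^ ((n+1) * j) * (1 - x ^ (n+1)))) := by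
        intro j hj
        have hind := hSind.measure_inter_preimage_eq_mul {k - j} {j}
          (measurableSet_singleton _) (measurableSet_singleton _)
        have hpre1 : (fun ω => ∑ i ∈ Finset.Icc m n, Z i ω) ⁻¹' {k - j}
            = {ω | ∑ i ∈ Finset.Icc m n, Z i ω = k - j} := rfl
        have hpre2 : Z (n+1) ⁻¹' {j} = {ω | Z (n+1) ω = j} := rfl
        rw [hpre1, hpre2] at hind
        rw [hind, ih (k - j), pmf_eq' P x hx0 Z hmeas hgeom (n+1) (by omega) j,
          ← ENNReal.ofReal_mul (hTnn (k - j))]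
      rw [Finset.sum_congr rfl hterm, ← ENNReal.ofReal_sum_of_nonneg]
      · congr 1
        -- real identity
        have hAr : ∀ r : ℕ, (∏ i ∈ Finset.Icc (n - m + 1) (n - m + r), (1 - x ^ i))
            = ∏ i ∈ Finset.range r, (1 - x ^ (a + i)) := by
          intro r
          rw [← Finset.Ico_add_one_right_eq_Icc, Finset.prod_Ico_eq_prod_range]
          rw [show n - m + r + 1 - (n - m + 1) = r by omega]
        have hDr : ∀ r : ℕ, (∏ i ∈ Finset.Icc 1 r, (1 - x ^ i))
            = ∏ i ∈ Finset.range r, (1 - x ^ (1 + i)) := by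
          intro r
          rw [← Finset.Ico_add_one_right_eq_Icc, Finset.prod_Ico_eq_prod_range]
          rw [show r + 1 - 1 = r by omega]
        have hAr' : (∏ i ∈ Finset.Icc (n + 1 - m + 1) (n + 1 - m + k), (1 - x ^ i))
            = ∏ i ∈ Finset.range k, (1 - x ^ (a + 1 + i)) := by
          rw [← Finset.Ico_add_one_right_eq_Icc, Finset.prod_Ico_eq_prod_range]
          rw [show n + 1 - m + k + 1 - (n + 1 - m + 1) = k by omega]
          apply Finset.prod_congr rfl
          intro i _
          rw [show n + 1 - m + 1 + i = a + 1 + i by omega]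
        have hB' : (∏ i ∈ Finset.Icc m (n+1), (1 - x ^ i))
            = (∏ i ∈ Finset.Icc m n, (1 - x ^ i)) * (1 - x ^ (n+1)) := by
          rw [Finset.prod_Icc_succ_top (by omega : m ≤ n + 1)]
        have hre : ∀ j ∈ Finset.range (k+1),
            (x ^ (m * (k-j))
              * (∏ i ∈ Finset.Icc (n - m + 1) (n - m + (k-j)), (1 - x ^ i))
              * (∏ i ∈ Finset.Icc m n, (1 - x ^ i))
              / ∏ i ∈ Finset.Icc 1 (k-j), (1 - x ^ i))
              * (x ^ ((n+1) * j) * (1 - x ^ (n+1)))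
            = (x ^ (m * k) * (∏ i ∈ Finset.Icc m n, (1 - x ^ i)) * (1 - x ^ (n+1)))
              * (x ^ (a * j) * ((∏ i ∈ Finset.range (k-j), (1 - x ^ (a + i)))
                  / ∏ i ∈ Finset.range (k-j), (1 - x ^ (1 + i)))) := by
          intro j hj
          simp only [Finset.mem_range] at hj
          have hjk : j ≤ k := by omega
          have hexp : m * (k - j) + (n+1) * j = m * k + a * j := by
            have h1 : (k - j) + j = k := by omega
            calc m * (k-j) + (n+1) * j = m * (k-j) + (m + a) * j := by rw [hma]
              _ = m * ((k-j) + j) + a * j := by ring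
              _ = m * k + a * j := by rw [h1]
          have hpow : x ^ (m * (k-j)) * x ^ ((n+1) * j) = x ^ (m * k) * x ^ (a * j) := by
            rw [← pow_add, ← pow_add, hexp]
          rw [hAr (k - j), hDr (k - j)]
          rw [div_mul_eq_mul_div, mul_div_assoc', mul_div_assoc']
          congr 1
          linear_combination (∏ i ∈ Finset.range (k-j), (1 - x ^ (a + i)))
            * (∏ i ∈ Finset.Icc m n, (1 - x ^ i)) * (1 - x ^ (n+1)) * hpow
        rw [Finset.sum_congr rfl hre, ← Finset.mul_sum, keyId' x hx0 hx1 a k]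
        rw [hAr', hB', hDr k]
        ring
      · intro j hj
        apply mul_nonneg (hTnn (k - j))
        have h1 : (0:ℝ) ≤ 1 - x ^ (n+1) := by
          have := pow_le_one₀ hx0.le hx1.le (n := n+1)
          linarith
        exact mul_nonneg (by positivity) h1
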